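/- Let n ≥ 7 with n ≡ 1 or 5 (mod 6) be prime. For each 1 ≤ i ≤ (n-1)/2, the edge set A_i ∪ B_i ∪ D_{i-1} can be partitioned into three perfect matchings of the complete graph on vertex set {0,...,2n-1}, where A_i = { {x,y} ⊂ {0,...,n-1} : y-x ≡ ±i (mod n) }, B_i = { {x,y} ⊂ {n,...,2n-1} : y-x ≡ ±i (mod n) }, and D_{i-1} = { {x,y} : 0 ≤ x ≤ n-1, n ≤ y ≤ 2n-1, y-x ≡ i-1 (mod n) }. -/
import Mathlib

/-- `A_i = { {x,y} ⊆ {0,…,n-1} : y - x ≡ ±i (mod n) }`. -/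
def AA (n i : ℕ) : Set (Finset ℕ) :=
  { p | ∃ x y : ℕ, x < n ∧ y < n ∧ x ≠ y ∧
      ((y + n - x) % n = i ∨ (x + n - y) % n = i) ∧ p = {x, y} }

/-- `B_i = { {x,y} ⊆ {n,…,2n-1} : y - x ≡ ±i (mod n) }`. -/
def BB (n i : ℕ) : Set (Finset ℕ) :=
  { p | ∃ x y : ℕ, n ≤ x ∧ x < 2 * n ∧ n ≤ y ∧ y < 2 * n ∧ x ≠ y ∧
      ((y + n - x) % n = i ∨ (x + n - y) % n = i) ∧ p = {x, y} }

/-- `C_i = { {x,y} : 0 ≤ x ≤ n-1, n ≤ y ≤ 2n-1, x + y ≡ i (mod n) }`. -/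
def DD (n i : ℕ) : Set (Finset ℕ) :=
  { p | ∃ x y : ℕ, x < n ∧ n ≤ y ∧ y < 2 * n ∧ (y - x) % n = i ∧ p = {x, y} }

/-- A perfect matching (one-factor) of the complete graph on `{0,…,2n-1}`. -/
def IsOneFactor (n : ℕ) (F : Set (Finset ℕ)) : Prop :=
  (∀ p ∈ F, p.card = 2 ∧ ∀ x ∈ p, x < 2 * n) ∧
  (F.Pairwise fun p q => Disjoint p q) ∧
  (∀ v < 2 * n, ∃ p ∈ F, v ∈ p)

namespace ABD

def av (n i k : ℕ) : ℕ := k * i % n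
def bv (n i k : ℕ) : ℕ := n + (k * i + (i - 1)) % n
def eA (n i k : ℕ) : Finset ℕ := {av n i k, av n i (k + 1)}
def eB (n i k : ℕ) : Finset ℕ := {bv n i k, bv n i (k + 1)}
def eD (n i k : ℕ) : Finset ℕ := {av n i k, bv n i k}

def OS (n : ℕ) : Set ℕ := {k | k % 2 = 1 ∧ k < n}
def ES (n : ℕ) : Set ℕ := {k | k % 2 = 0 ∧ 2 ≤ k ∧ k < n}

def FF1 (n i : ℕ) : Set (Finset ℕ) := eA n i '' OS n ∪ eB n i '' OS n ∪ {eD n i 0}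
def FF2 (n i : ℕ) : Set (Finset ℕ) := eA n i '' ES n ∪ eB n i '' ES n ∪ {eD n i 1}
def FF3 (n i : ℕ) : Set (Finset ℕ) := {eA n i 0, eB n i 0} ∪ eD n i '' {k | 2 ≤ k ∧ k < n}

structure Ctx (n i : ℕ) : Prop where
  hp : n.Prime
  h7 : 7 ≤ n
  hodd : n % 2 = 1
  hi1 : 1 ≤ i
  h2i : 2 * i < n

variable {n i k m : ℕ}

lemma Ctx.hn0 (c : Ctx n i) : 0 < n := by have := c.h7; omega
lemma Ctx.hin (c : Ctx n i) : i < n := by have := c.h2i; omega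

lemma mod2 (hn : 0 < n) {a : ℕ} (h : a < 2 * n) :
    (a % n = a ∧ a < n) ∨ (a % n + n = a ∧ n ≤ a) := by
  rcases lt_or_ge a n with h1 | h1
  · exact Or.inl ⟨Nat.mod_eq_of_lt h1, h1⟩
  · refine Or.inr ⟨?_, h1⟩
    rw [Nat.mod_eq_sub_mod h1, Nat.mod_eq_of_lt (by omega)]
    omega

lemma av_lt (hn : 0 < n) : av n i k < n := Nat.mod_lt _ hn
lemma bv_ge : n ≤ bv n i k := Nat.le_add_right _ _
lemma bv_lt (hn : 0 < n) : bv n i k < 2 * n := by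
  have := Nat.mod_lt (k * i + (i - 1)) hn; unfold bv; omega

lemma mod_ne_of {d : ℕ} (hd : 0 < d) (hdn : d < n) : k % n ≠ (k + d) % n := by
  intro h
  have h2 : n ∣ (k + d) - k := (Nat.modEq_iff_dvd' (by omega)).mp h
  have h3 : k + d - k = d := by omega
  rw [h3] at h2
  have := Nat.le_of_dvd hd h2
  omega

lemma mul_mod_inj (c : Ctx n i) : k * i % n = m * i % n ↔ k % n = m % n := by
  have hnd : ¬ n ∣ i := by
    intro h; have := Nat.le_of_dvd (by have := c.hi1; omega) h; have := c.hin; omega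
  have hcop : Nat.gcd n i = 1 := (Nat.Prime.coprime_iff_not_dvd c.hp).mpr hnd
  constructor
  · intro h
    exact Nat.ModEq.cancel_right_of_coprime hcop h
  · intro h
    exact Nat.ModEq.mul_right i h

lemma av_inj (c : Ctx n i) : av n i k = av n i m ↔ k % n = m % n := mul_mod_inj c

lemma bv_inj (c : Ctx n i) : bv n i k = bv n i m ↔ k % n = m % n := by
  unfold bv
  constructor
  · intro h
    have h2 : k * i + (i - 1) ≡ m * i + (i - 1) [MOD n] := by
      have : (k * i + (i - 1)) % n = (m * i + (i - 1)) % n := by omega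
      exact this
    have h3 : k * i ≡ m * i [MOD n] := Nat.ModEq.add_right_cancel' _ h2
    exact (mul_mod_inj c).mp h3
  · intro h
    have h3 : k * i ≡ m * i [MOD n] := (mul_mod_inj c).mpr h
    have := Nat.ModEq.add_right (i - 1) h3
    unfold Nat.ModEq at this
    omega

lemma av_succ : av n i (k + 1) = (av n i k + i) % n := by
  unfold av; rw [add_mul, one_mul, ← Nat.mod_add_mod]

lemma bv_eq : bv n i k = n + (av n i k + (i - 1)) % n := by
  unfold bv av; rw [Nat.mod_add_mod]

lemma bv_succ : bv n i (k + 1) = n + ((bv n i k - n) + i) % n := by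
  unfold bv
  have h1 : (k + 1) * i + (i - 1) = (k * i + (i - 1)) + i := by
    rw [add_mul, one_mul]; omega
  rw [h1, ← Nat.mod_add_mod]
  have h2 : n + (k * i + (i - 1)) % n - n = (k * i + (i - 1)) % n := by omega
  rw [h2]

lemma diff_mod (c : Ctx n i) {s : ℕ} (hs : s < n) : ((s + i) % n + n - s) % n = i := by
  have hin := c.hin
  have hn0 := c.hn0
  have m1 := mod2 hn0 (a := s + i) (by omega)
  have hlt : (s + i) % n < n := Nat.mod_lt _ hn0
  have m2 := mod2 hn0 (a := (s + i) % n + n - s) (by omega)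
  omega

lemma av_ne_succ (c : Ctx n i) : av n i k ≠ av n i (k + 1) := by
  intro h
  exact mod_ne_of one_pos (by have := c.h7; omega) ((av_inj c).mp h)

lemma bv_ne_succ (c : Ctx n i) : bv n i k ≠ bv n i (k + 1) := by
  intro h
  exact mod_ne_of one_pos (by have := c.h7; omega) ((bv_inj c).mp h)

lemma av_ne_bv (hn : 0 < n) : av n i k ≠ bv n i m := by
  have := av_lt (i := i) (k := k) hn; have := bv_ge (n := n) (i := i) (k := m); omega

lemma av_n : av n i n = av n i 0 := by
  unfold av; rw [Nat.mul_mod_right, zero_mul, Nat.zero_mod]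

lemma bv_n : bv n i n = bv n i 0 := by
  unfold bv; rw [← Nat.mod_add_mod, ← Nat.mod_add_mod (0 * i), Nat.mul_mod_right, Nat.zero_mul, Nat.zero_mod]

lemma av_surj (c : Ctx n i) (v : ℕ) (hv : v < n) : ∃ k, k < n ∧ av n i k = v := by
  haveI : Fact n.Prime := ⟨c.hp⟩
  haveI : NeZero n := ⟨by have := c.h7; omega⟩
  have hi0 : (i : ZMod n) ≠ 0 := by
    intro h
    rw [ZMod.natCast_eq_zero_iff] at h
    have := Nat.le_of_dvd (by have := c.hi1; omega) h
    have := c.hin; omega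
  set x : ZMod n := (v : ZMod n) * (i : ZMod n)⁻¹ with hx
  refine ⟨x.val, x.val_lt, ?_⟩
  unfold av
  have h1 : ((x.val * i : ℕ) : ZMod n) = (v : ZMod n) := by
    push_cast
    rw [ZMod.natCast_val, ZMod.cast_id, hx, mul_assoc, inv_mul_cancel₀ hi0, mul_one]
  have h2 : x.val * i ≡ v [MOD n] := (ZMod.natCast_eq_natCast_iff _ _ _).mp h1
  unfold Nat.ModEq at h2
  rw [h2, Nat.mod_eq_of_lt hv]

lemma bv_surj (c : Ctx n i) (v : ℕ) (hv1 : n ≤ v) (hv2 : v < 2 * n) :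
    ∃ k, k < n ∧ bv n i k = v := by
  have hn0 := c.hn0
  have hin := c.hin
  obtain ⟨k, hk, hak⟩ := av_surj c ((v - n + n - (i - 1)) % n) (Nat.mod_lt _ hn0)
  refine ⟨k, hk, ?_⟩
  rw [bv_eq, hak]
  have m1 := mod2 hn0 (a := v - n + n - (i - 1)) (by omega)
  have hlt : (v - n + n - (i - 1)) % n < n := Nat.mod_lt _ hn0
  have m2 := mod2 hn0 (a := (v - n + n - (i - 1)) % n + (i - 1)) (by omega)
  omega

lemma mem_pair {x a b : ℕ} : x ∈ ({a, b} : Finset ℕ) ↔ x = a ∨ x = b := by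
  simp [Finset.mem_insert, Finset.mem_singleton]

lemma disj_pair {a b c d : ℕ} (h1 : a ≠ c) (h2 : a ≠ d) (h3 : b ≠ c) (h4 : b ≠ d) :
    Disjoint ({a, b} : Finset ℕ) ({c, d} : Finset ℕ) := by
  rw [Finset.disjoint_left]
  intro x hx hy
  rw [mem_pair] at hx hy
  rcases hx with rfl | rfl <;> rcases hy with rfl | rfl <;> simp_all

lemma eA_ne_eB (hn : 0 < n) : eA n i k ≠ eB n i m := by
  intro h
  have h1 : bv n i m ∈ eA n i k := by rw [h]; unfold eB; rw [mem_pair]; left; rfl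
  unfold eA at h1; rw [mem_pair] at h1
  rcases h1 with h1 | h1 <;> exact av_ne_bv hn h1.symm

lemma eA_ne_eD (hn : 0 < n) : eA n i k ≠ eD n i m := by
  intro h
  have h1 : bv n i m ∈ eA n i k := by rw [h]; unfold eD; rw [mem_pair]; right; rfl
  unfold eA at h1; rw [mem_pair] at h1
  rcases h1 with h1 | h1 <;> exact av_ne_bv hn h1.symm

lemma eB_ne_eD (hn : 0 < n) : eB n i k ≠ eD n i m := by
  intro h
  have h1 : av n i m ∈ eB n i k := by rw [h]; unfold eD; rw [mem_pair]; left; rfl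
  unfold eB at h1; rw [mem_pair] at h1
  rcases h1 with h1 | h1 <;> exact av_ne_bv hn h1
lemma eA_idx (c : Ctx n i) (h : eA n i k = eA n i m) : k % n = m % n := by
  have h7 := c.h7
  have h1 : av n i k ∈ eA n i m := by rw [← h]; unfold eA; rw [mem_pair]; left; rfl
  have h2 : av n i (k + 1) ∈ eA n i m := by rw [← h]; unfold eA; rw [mem_pair]; right; rfl
  unfold eA at h1 h2; rw [mem_pair] at h1 h2
  rw [av_inj c, av_inj c] at h1 h2
  rcases h1 with h1 | h1
  · exact h1
  · rcases h2 with h2 | h2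
    · -- k ≡ m+1, k+1 ≡ m : then m ≡ m+2, contradiction
      have h3 : (k + 1) % n = (m + 1 + 1) % n := Nat.ModEq.add_right 1 h1
      have h4 : m % n = (m + 2) % n := h2.symm.trans h3
      exact absurd h4 (mod_ne_of (by omega) (by omega))
    · -- k ≡ m+1, k+1 ≡ m+1 : then k ≡ k+1, contradiction
      have h4 : k % n = (k + 1) % n := h1.trans h2.symm
      exact absurd h4 (mod_ne_of (by omega) (by omega))

lemma eB_idx (c : Ctx n i) (h : eB n i k = eB n i m) : k % n = m % n := by
  have h7 := c.h7
  have h1 : bv n i k ∈ eB n i m := by rw [← h]; unfold eB; rw [mem_pair]; left; rfl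
  have h2 : bv n i (k + 1) ∈ eB n i m := by rw [← h]; unfold eB; rw [mem_pair]; right; rfl
  unfold eB at h1 h2; rw [mem_pair] at h1 h2
  rw [bv_inj c, bv_inj c] at h1 h2
  rcases h1 with h1 | h1
  · exact h1
  · rcases h2 with h2 | h2
    · have h3 : (k + 1) % n = (m + 1 + 1) % n := Nat.ModEq.add_right 1 h1
      have h4 : m % n = (m + 2) % n := h2.symm.trans h3
      exact absurd h4 (mod_ne_of (by omega) (by omega))
    · have h4 : k % n = (k + 1) % n := h1.trans h2.symm
      exact absurd h4 (mod_ne_of (by omega) (by omega))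

lemma eD_idx (c : Ctx n i) (h : eD n i k = eD n i m) : k % n = m % n := by
  have h1 : av n i k ∈ eD n i m := by rw [← h]; unfold eD; rw [mem_pair]; left; rfl
  unfold eD at h1; rw [mem_pair] at h1
  rcases h1 with h1 | h1
  · exact (av_inj c).mp h1
  · exact absurd h1 (av_ne_bv c.hn0)

lemma disj_eA_eA (c : Ctx n i) (h1 : k % n ≠ m % n) (h2 : k % n ≠ (m + 1) % n)
    (h3 : (k + 1) % n ≠ m % n) (h4 : (k + 1) % n ≠ (m + 1) % n) :
    Disjoint (eA n i k) (eA n i m) :=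
  disj_pair (fun h => h1 ((av_inj c).mp h)) (fun h => h2 ((av_inj c).mp h))
    (fun h => h3 ((av_inj c).mp h)) (fun h => h4 ((av_inj c).mp h))

lemma disj_eB_eB (c : Ctx n i) (h1 : k % n ≠ m % n) (h2 : k % n ≠ (m + 1) % n)
    (h3 : (k + 1) % n ≠ m % n) (h4 : (k + 1) % n ≠ (m + 1) % n) :
    Disjoint (eB n i k) (eB n i m) :=
  disj_pair (fun h => h1 ((bv_inj c).mp h)) (fun h => h2 ((bv_inj c).mp h))
    (fun h => h3 ((bv_inj c).mp h)) (fun h => h4 ((bv_inj c).mp h))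

lemma disj_eA_eB (hn : 0 < n) : Disjoint (eA n i k) (eB n i m) :=
  disj_pair (av_ne_bv hn) (av_ne_bv hn) (av_ne_bv hn) (av_ne_bv hn)

lemma disj_eA_eD (c : Ctx n i) (h1 : k % n ≠ m % n) (h2 : (k + 1) % n ≠ m % n) :
    Disjoint (eA n i k) (eD n i m) :=
  disj_pair (fun h => h1 ((av_inj c).mp h)) (av_ne_bv c.hn0)
    (fun h => h2 ((av_inj c).mp h)) (av_ne_bv c.hn0)

lemma disj_eB_eD (c : Ctx n i) (h1 : k % n ≠ m % n) (h2 : (k + 1) % n ≠ m % n) :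
    Disjoint (eB n i k) (eD n i m) :=
  disj_pair (fun h => (av_ne_bv c.hn0) h.symm) (fun h => h1 ((bv_inj c).mp h))
    (fun h => (av_ne_bv c.hn0) h.symm) (fun h => h2 ((bv_inj c).mp h))

lemma disj_eD_eD (c : Ctx n i) (h1 : k % n ≠ m % n) :
    Disjoint (eD n i k) (eD n i m) :=
  disj_pair (fun h => h1 ((av_inj c).mp h)) (av_ne_bv c.hn0)
    (fun h => (av_ne_bv c.hn0) h.symm) (fun h => h1 ((bv_inj c).mp h))
lemma eA_mem_AA (c : Ctx n i) (k : ℕ) : eA n i k ∈ AA n i := by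
  refine ⟨av n i k, av n i (k + 1), av_lt c.hn0, av_lt c.hn0, av_ne_succ c, ?_, rfl⟩
  left
  rw [av_succ]
  exact diff_mod c (av_lt c.hn0)

lemma eB_mem_BB (c : Ctx n i) (k : ℕ) : eB n i k ∈ BB n i := by
  refine ⟨bv n i k, bv n i (k + 1), bv_ge, bv_lt c.hn0, bv_ge, bv_lt c.hn0,
    bv_ne_succ c, ?_, rfl⟩
  left
  have hs : bv n i k - n < n := by
    have := bv_lt (i := i) (k := k) c.hn0; have := bv_ge (n := n) (i := i) (k := k); omega
  rw [bv_succ]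
  have h1 : n + (bv n i k - n + i) % n + n - bv n i k
      = (bv n i k - n + i) % n + n - (bv n i k - n) := by
    have := bv_ge (n := n) (i := i) (k := k)
    have := Nat.mod_lt (bv n i k - n + i) c.hn0
    omega
  rw [h1]
  exact diff_mod c hs

lemma eD_mem_DD (c : Ctx n i) (k : ℕ) : eD n i k ∈ DD n (i - 1) := by
  refine ⟨av n i k, bv n i k, av_lt c.hn0, bv_ge, bv_lt c.hn0, ?_, rfl⟩
  rw [bv_eq]
  have hx := av_lt (i := i) (k := k) c.hn0
  have hin := c.hin
  have hn0 := c.hn0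
  have m1 := mod2 hn0 (a := av n i k + (i - 1)) (by omega)
  have hlt : (av n i k + (i - 1)) % n < n := Nat.mod_lt _ hn0
  have m2 := mod2 hn0 (a := n + (av n i k + (i - 1)) % n - av n i k) (by omega)
  omega
/-! ### Membership descriptions of the factors -/

lemma mem_FF1 {p : Finset ℕ} :
    p ∈ FF1 n i ↔ (∃ k, (k % 2 = 1 ∧ k < n) ∧ eA n i k = p) ∨
      (∃ k, (k % 2 = 1 ∧ k < n) ∧ eB n i k = p) ∨ p = eD n i 0 := by
  simp only [FF1, OS, Set.mem_union, Set.mem_image, Set.mem_setOf_eq,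
    Set.mem_singleton_iff, or_assoc]

lemma mem_FF2 {p : Finset ℕ} :
    p ∈ FF2 n i ↔ (∃ k, (k % 2 = 0 ∧ 2 ≤ k ∧ k < n) ∧ eA n i k = p) ∨
      (∃ k, (k % 2 = 0 ∧ 2 ≤ k ∧ k < n) ∧ eB n i k = p) ∨ p = eD n i 1 := by
  simp only [FF2, ES, Set.mem_union, Set.mem_image, Set.mem_setOf_eq,
    Set.mem_singleton_iff, or_assoc]

lemma mem_FF3 {p : Finset ℕ} :
    p ∈ FF3 n i ↔ p = eA n i 0 ∨ p = eB n i 0 ∨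
      (∃ k, (2 ≤ k ∧ k < n) ∧ eD n i k = p) := by
  simp [FF3, Set.mem_union, Set.mem_image, Set.mem_setOf_eq, Set.mem_insert_iff,
    Set.mem_singleton_iff, or_assoc]
/-! ### Edge basics -/

lemma eA_good (c : Ctx n i) : (eA n i k).card = 2 ∧ ∀ x ∈ eA n i k, x < 2 * n := by
  constructor
  · exact Finset.card_pair (av_ne_succ c)
  · intro x hx
    unfold eA at hx; rw [mem_pair] at hx
    have h1 := av_lt (i := i) (k := k) c.hn0
    have h2 := av_lt (i := i) (k := k + 1) c.hn0
    omega

lemma eB_good (c : Ctx n i) : (eB n i k).card = 2 ∧ ∀ x ∈ eB n i k, x < 2 * n := by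
  constructor
  · exact Finset.card_pair (bv_ne_succ c)
  · intro x hx
    unfold eB at hx; rw [mem_pair] at hx
    have h1 := bv_lt (i := i) (k := k) c.hn0
    have h2 := bv_lt (i := i) (k := k + 1) c.hn0
    omega

lemma eD_good (c : Ctx n i) : (eD n i k).card = 2 ∧ ∀ x ∈ eD n i k, x < 2 * n := by
  constructor
  · exact Finset.card_pair (av_ne_bv c.hn0)
  · intro x hx
    unfold eD at hx; rw [mem_pair] at hx
    have h1 := av_lt (i := i) (k := k) c.hn0
    have h2 := bv_lt (i := i) (k := k) c.hn0
    omega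

/-! ### Pairwise disjointness inside each factor -/

lemma FF1_pairwise (c : Ctx n i) : (FF1 n i).Pairwise fun p q => Disjoint p q := by
  have h7 := c.h7; have hodd := c.hodd
  intro p hp q hq hpq
  rw [mem_FF1] at hp hq
  rcases hp with ⟨k, ⟨hk1, hk2⟩, rfl⟩ | ⟨k, ⟨hk1, hk2⟩, rfl⟩ | rfl <;>
    rcases hq with ⟨m, ⟨hm1, hm2⟩, rfl⟩ | ⟨m, ⟨hm1, hm2⟩, rfl⟩ | rfl
  · have hkm : k ≠ m := by rintro rfl; exact hpq rfl
    have e1 : k % n = k := Nat.mod_eq_of_lt (by omega)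
    have e2 : (k + 1) % n = k + 1 := Nat.mod_eq_of_lt (by omega)
    have e3 : m % n = m := Nat.mod_eq_of_lt (by omega)
    have e4 : (m + 1) % n = m + 1 := Nat.mod_eq_of_lt (by omega)
    exact disj_eA_eA c (by omega) (by omega) (by omega) (by omega)
  · exact disj_eA_eB c.hn0
  · have e1 : k % n = k := Nat.mod_eq_of_lt (by omega)
    have e2 : (k + 1) % n = k + 1 := Nat.mod_eq_of_lt (by omega)
    have e3 : (0 : ℕ) % n = 0 := Nat.zero_mod n
    exact disj_eA_eD c (by omega) (by omega)
  · exact (disj_eA_eB c.hn0).symm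
  · have hkm : k ≠ m := by rintro rfl; exact hpq rfl
    have e1 : k % n = k := Nat.mod_eq_of_lt (by omega)
    have e2 : (k + 1) % n = k + 1 := Nat.mod_eq_of_lt (by omega)
    have e3 : m % n = m := Nat.mod_eq_of_lt (by omega)
    have e4 : (m + 1) % n = m + 1 := Nat.mod_eq_of_lt (by omega)
    exact disj_eB_eB c (by omega) (by omega) (by omega) (by omega)
  · have e1 : k % n = k := Nat.mod_eq_of_lt (by omega)
    have e2 : (k + 1) % n = k + 1 := Nat.mod_eq_of_lt (by omega)
    have e3 : (0 : ℕ) % n = 0 := Nat.zero_mod n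
    exact disj_eB_eD c (by omega) (by omega)
  · have e1 : m % n = m := Nat.mod_eq_of_lt (by omega)
    have e2 : (m + 1) % n = m + 1 := Nat.mod_eq_of_lt (by omega)
    have e3 : (0 : ℕ) % n = 0 := Nat.zero_mod n
    exact (disj_eA_eD c (by omega) (by omega)).symm
  · have e1 : m % n = m := Nat.mod_eq_of_lt (by omega)
    have e2 : (m + 1) % n = m + 1 := Nat.mod_eq_of_lt (by omega)
    have e3 : (0 : ℕ) % n = 0 := Nat.zero_mod n
    exact (disj_eB_eD c (by omega) (by omega)).symm
  · exact absurd rfl hpq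

lemma FF2_pairwise (c : Ctx n i) : (FF2 n i).Pairwise fun p q => Disjoint p q := by
  have h7 := c.h7; have hodd := c.hodd
  intro p hp q hq hpq
  rw [mem_FF2] at hp hq
  rcases hp with ⟨k, ⟨hk1, hk2, hk3⟩, rfl⟩ | ⟨k, ⟨hk1, hk2, hk3⟩, rfl⟩ | rfl <;>
    rcases hq with ⟨m, ⟨hm1, hm2, hm3⟩, rfl⟩ | ⟨m, ⟨hm1, hm2, hm3⟩, rfl⟩ | rfl
  · have hkm : k ≠ m := by rintro rfl; exact hpq rfl
    have e1 : k % n = k := Nat.mod_eq_of_lt (by omega)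
    have e2 := mod2 c.hn0 (a := k + 1) (by omega)
    have e3 : m % n = m := Nat.mod_eq_of_lt (by omega)
    have e4 := mod2 c.hn0 (a := m + 1) (by omega)
    exact disj_eA_eA c (by omega) (by omega) (by omega) (by omega)
  · exact disj_eA_eB c.hn0
  · have e1 : k % n = k := Nat.mod_eq_of_lt (by omega)
    have e2 := mod2 c.hn0 (a := k + 1) (by omega)
    have e3 : (1 : ℕ) % n = 1 := Nat.mod_eq_of_lt (by omega)
    exact disj_eA_eD c (by omega) (by omega)
  · exact (disj_eA_eB c.hn0).symm
  · have hkm : k ≠ m := by rintro rfl; exact hpq rfl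
    have e1 : k % n = k := Nat.mod_eq_of_lt (by omega)
    have e2 := mod2 c.hn0 (a := k + 1) (by omega)
    have e3 : m % n = m := Nat.mod_eq_of_lt (by omega)
    have e4 := mod2 c.hn0 (a := m + 1) (by omega)
    exact disj_eB_eB c (by omega) (by omega) (by omega) (by omega)
  · have e1 : k % n = k := Nat.mod_eq_of_lt (by omega)
    have e2 := mod2 c.hn0 (a := k + 1) (by omega)
    have e3 : (1 : ℕ) % n = 1 := Nat.mod_eq_of_lt (by omega)
    exact disj_eB_eD c (by omega) (by omega)
  · have e1 : m % n = m := Nat.mod_eq_of_lt (by omega)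
    have e2 := mod2 c.hn0 (a := m + 1) (by omega)
    have e3 : (1 : ℕ) % n = 1 := Nat.mod_eq_of_lt (by omega)
    exact (disj_eA_eD c (by omega) (by omega)).symm
  · have e1 : m % n = m := Nat.mod_eq_of_lt (by omega)
    have e2 := mod2 c.hn0 (a := m + 1) (by omega)
    have e3 : (1 : ℕ) % n = 1 := Nat.mod_eq_of_lt (by omega)
    exact (disj_eB_eD c (by omega) (by omega)).symm
  · exact absurd rfl hpq

lemma FF3_pairwise (c : Ctx n i) : (FF3 n i).Pairwise fun p q => Disjoint p q := by
  have h7 := c.h7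
  intro p hp q hq hpq
  rw [mem_FF3] at hp hq
  rcases hp with rfl | rfl | ⟨k, ⟨hk1, hk2⟩, rfl⟩ <;>
    rcases hq with rfl | rfl | ⟨m, ⟨hm1, hm2⟩, rfl⟩
  · exact absurd rfl hpq
  · exact disj_eA_eB c.hn0
  · have e1 : (0 : ℕ) % n = 0 := Nat.zero_mod n
    have e2 : (0 + 1 : ℕ) % n = 1 := Nat.mod_eq_of_lt (by omega)
    have e3 : m % n = m := Nat.mod_eq_of_lt (by omega)
    exact disj_eA_eD c (by omega) (by omega)
  · exact (disj_eA_eB c.hn0).symm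
  · exact absurd rfl hpq
  · have e1 : (0 : ℕ) % n = 0 := Nat.zero_mod n
    have e2 : (0 + 1 : ℕ) % n = 1 := Nat.mod_eq_of_lt (by omega)
    have e3 : m % n = m := Nat.mod_eq_of_lt (by omega)
    exact disj_eB_eD c (by omega) (by omega)
  · have e1 : (0 : ℕ) % n = 0 := Nat.zero_mod n
    have e2 : (0 + 1 : ℕ) % n = 1 := Nat.mod_eq_of_lt (by omega)
    have e3 : k % n = k := Nat.mod_eq_of_lt (by omega)
    exact (disj_eA_eD c (by omega) (by omega)).symm
  · have e1 : (0 : ℕ) % n = 0 := Nat.zero_mod n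
    have e2 : (0 + 1 : ℕ) % n = 1 := Nat.mod_eq_of_lt (by omega)
    have e3 : k % n = k := Nat.mod_eq_of_lt (by omega)
    exact (disj_eB_eD c (by omega) (by omega)).symm
  · have hkm : k ≠ m := by rintro rfl; exact hpq rfl
    have e1 : k % n = k := Nat.mod_eq_of_lt (by omega)
    have e3 : m % n = m := Nat.mod_eq_of_lt (by omega)
    exact disj_eD_eD c (by omega)
/-! ### Coverage -/

lemma mem_eA_l (h : av n i k = v) : v ∈ eA n i k := by
  unfold eA; rw [mem_pair]; left; omega
lemma mem_eA_r (h : av n i (k + 1) = v) : v ∈ eA n i k := by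
  unfold eA; rw [mem_pair]; right; omega
lemma mem_eB_l (h : bv n i k = v) : v ∈ eB n i k := by
  unfold eB; rw [mem_pair]; left; omega
lemma mem_eB_r (h : bv n i (k + 1) = v) : v ∈ eB n i k := by
  unfold eB; rw [mem_pair]; right; omega
lemma mem_eD_l (h : av n i k = v) : v ∈ eD n i k := by
  unfold eD; rw [mem_pair]; left; omega
lemma mem_eD_r (h : bv n i k = v) : v ∈ eD n i k := by
  unfold eD; rw [mem_pair]; right; omega

lemma FF1_cover (c : Ctx n i) : ∀ v < 2 * n, ∃ p ∈ FF1 n i, v ∈ p := by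
  have h7 := c.h7; have hodd := c.hodd
  intro v hv
  rcases lt_or_ge v n with hvn | hvn
  · obtain ⟨k, hk, hak⟩ := av_surj c v hvn
    rcases Nat.mod_two_eq_zero_or_one k with hpar | hpar
    · rcases Nat.eq_zero_or_pos k with rfl | hk0
      · exact ⟨eD n i 0, mem_FF1.mpr (Or.inr (Or.inr rfl)), mem_eD_l hak⟩
      · refine ⟨eA n i (k - 1), mem_FF1.mpr (Or.inl ⟨k - 1, ⟨by omega, by omega⟩, rfl⟩), ?_⟩
        apply mem_eA_r; rw [show k - 1 + 1 = k by omega]; exact hak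
    · exact ⟨eA n i k, mem_FF1.mpr (Or.inl ⟨k, ⟨hpar, hk⟩, rfl⟩), mem_eA_l hak⟩
  · obtain ⟨k, hk, hbk⟩ := bv_surj c v hvn hv
    rcases Nat.mod_two_eq_zero_or_one k with hpar | hpar
    · rcases Nat.eq_zero_or_pos k with rfl | hk0
      · exact ⟨eD n i 0, mem_FF1.mpr (Or.inr (Or.inr rfl)), mem_eD_r hbk⟩
      · refine ⟨eB n i (k - 1), mem_FF1.mpr (Or.inr (Or.inl ⟨k - 1, ⟨by omega, by omega⟩, rfl⟩)), ?_⟩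
        apply mem_eB_r; rw [show k - 1 + 1 = k by omega]; exact hbk
    · exact ⟨eB n i k, mem_FF1.mpr (Or.inr (Or.inl ⟨k, ⟨hpar, hk⟩, rfl⟩)), mem_eB_l hbk⟩

lemma FF2_cover (c : Ctx n i) : ∀ v < 2 * n, ∃ p ∈ FF2 n i, v ∈ p := by
  have h7 := c.h7; have hodd := c.hodd
  intro v hv
  rcases lt_or_ge v n with hvn | hvn
  · obtain ⟨k, hk, hak⟩ := av_surj c v hvn
    rcases Nat.mod_two_eq_zero_or_one k with hpar | hpar
    · rcases Nat.eq_zero_or_pos k with rfl | hk0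
      · refine ⟨eA n i (n - 1), mem_FF2.mpr (Or.inl ⟨n - 1, ⟨by omega, by omega, by omega⟩, rfl⟩), ?_⟩
        apply mem_eA_r; rw [show n - 1 + 1 = n by omega, av_n]; exact hak
      · exact ⟨eA n i k, mem_FF2.mpr (Or.inl ⟨k, ⟨hpar, by omega, hk⟩, rfl⟩), mem_eA_l hak⟩
    · rcases Nat.eq_or_lt_of_le (show 1 ≤ k by omega) with h1 | h1
      · exact ⟨eD n i 1, mem_FF2.mpr (Or.inr (Or.inr rfl)), mem_eD_l (by rw [h1]; exact hak)⟩
      · refine ⟨eA n i (k - 1), mem_FF2.mpr (Or.inl ⟨k - 1, ⟨by omega, by omega, by omega⟩, rfl⟩), ?_⟩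
        apply mem_eA_r; rw [show k - 1 + 1 = k by omega]; exact hak
  · obtain ⟨k, hk, hbk⟩ := bv_surj c v hvn hv
    rcases Nat.mod_two_eq_zero_or_one k with hpar | hpar
    · rcases Nat.eq_zero_or_pos k with rfl | hk0
      · refine ⟨eB n i (n - 1), mem_FF2.mpr (Or.inr (Or.inl ⟨n - 1, ⟨by omega, by omega, by omega⟩, rfl⟩)), ?_⟩
        apply mem_eB_r; rw [show n - 1 + 1 = n by omega, bv_n]; exact hbk
      · exact ⟨eB n i k, mem_FF2.mpr (Or.inr (Or.inl ⟨k, ⟨hpar, by omega, hk⟩, rfl⟩)), mem_eB_l hbk⟩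
    · rcases Nat.eq_or_lt_of_le (show 1 ≤ k by omega) with h1 | h1
      · exact ⟨eD n i 1, mem_FF2.mpr (Or.inr (Or.inr rfl)), mem_eD_r (by rw [h1]; exact hbk)⟩
      · refine ⟨eB n i (k - 1), mem_FF2.mpr (Or.inr (Or.inl ⟨k - 1, ⟨by omega, by omega, by omega⟩, rfl⟩)), ?_⟩
        apply mem_eB_r; rw [show k - 1 + 1 = k by omega]; exact hbk

lemma FF3_cover (c : Ctx n i) : ∀ v < 2 * n, ∃ p ∈ FF3 n i, v ∈ p := by
  have h7 := c.h7
  intro v hv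
  rcases lt_or_ge v n with hvn | hvn
  · obtain ⟨k, hk, hak⟩ := av_surj c v hvn
    match k, hak with
    | 0, hak => exact ⟨eA n i 0, mem_FF3.mpr (Or.inl rfl), mem_eA_l hak⟩
    | 1, hak => exact ⟨eA n i 0, mem_FF3.mpr (Or.inl rfl), mem_eA_r hak⟩
    | (m + 2), hak =>
      exact ⟨eD n i (m + 2), mem_FF3.mpr (Or.inr (Or.inr ⟨m + 2, ⟨by omega, hk⟩, rfl⟩)),
        mem_eD_l hak⟩
  · obtain ⟨k, hk, hbk⟩ := bv_surj c v hvn hv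
    match k, hbk with
    | 0, hbk => exact ⟨eB n i 0, mem_FF3.mpr (Or.inr (Or.inl rfl)), mem_eB_l hbk⟩
    | 1, hbk => exact ⟨eB n i 0, mem_FF3.mpr (Or.inr (Or.inl rfl)), mem_eB_r hbk⟩
    | (m + 2), hbk =>
      exact ⟨eD n i (m + 2), mem_FF3.mpr (Or.inr (Or.inr ⟨m + 2, ⟨by omega, hk⟩, rfl⟩)),
        mem_eD_r hbk⟩

lemma FF1_isOF (c : Ctx n i) : IsOneFactor n (FF1 n i) := by
  refine ⟨?_, FF1_pairwise c, FF1_cover c⟩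
  intro p hp
  rcases mem_FF1.mp hp with ⟨k, _, rfl⟩ | ⟨k, _, rfl⟩ | rfl
  · exact eA_good c
  · exact eB_good c
  · exact eD_good c

lemma FF2_isOF (c : Ctx n i) : IsOneFactor n (FF2 n i) := by
  refine ⟨?_, FF2_pairwise c, FF2_cover c⟩
  intro p hp
  rcases mem_FF2.mp hp with ⟨k, _, rfl⟩ | ⟨k, _, rfl⟩ | rfl
  · exact eA_good c
  · exact eB_good c
  · exact eD_good c

lemma FF3_isOF (c : Ctx n i) : IsOneFactor n (FF3 n i) := by
  refine ⟨?_, FF3_pairwise c, FF3_cover c⟩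
  intro p hp
  rcases mem_FF3.mp hp with rfl | rfl | ⟨k, _, rfl⟩
  · exact eA_good c
  · exact eB_good c
  · exact eD_good c
/-! ### Representation lemmas -/

lemma AA_repr (c : Ctx n i) {x y : ℕ} (hx : x < n) (hy : y < n)
    (hd : (y + n - x) % n = i) : ∃ k, k < n ∧ ({x, y} : Finset ℕ) = eA n i k := by
  have hn0 := c.hn0; have hin := c.hin
  have hy2 : y = (x + i) % n := by
    have m1 := mod2 hn0 (a := y + n - x) (by omega)
    have m2 := mod2 hn0 (a := x + i) (by omega)
    omega
  obtain ⟨k, hk, hak⟩ := av_surj c x hx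
  refine ⟨k, hk, ?_⟩
  unfold eA
  rw [av_succ, hak, ← hy2]

lemma BB_repr (c : Ctx n i) {x y : ℕ} (hx1 : n ≤ x) (hx2 : x < 2 * n)
    (hy1 : n ≤ y) (hy2 : y < 2 * n) (hd : (y + n - x) % n = i) :
    ∃ k, k < n ∧ ({x, y} : Finset ℕ) = eB n i k := by
  have hn0 := c.hn0; have hin := c.hin
  obtain ⟨k, hk, hbk⟩ := bv_surj c x hx1 hx2
  have hy3 : y = n + ((x - n) + i) % n := by
    have m1 := mod2 hn0 (a := y + n - x) (by omega)
    have m2 := mod2 hn0 (a := (x - n) + i) (by omega)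
    omega
  refine ⟨k, hk, ?_⟩
  unfold eB
  rw [bv_succ, hbk, ← hy3]

lemma DD_repr (c : Ctx n i) {x y : ℕ} (hx : x < n) (hy1 : n ≤ y) (hy2 : y < 2 * n)
    (hd : (y - x) % n = i - 1) : ∃ k, k < n ∧ ({x, y} : Finset ℕ) = eD n i k := by
  have hn0 := c.hn0; have hin := c.hin; have hi1 := c.hi1
  obtain ⟨k, hk, hak⟩ := av_surj c x hx
  have hy3 : y = n + (x + (i - 1)) % n := by
    have m1 := mod2 hn0 (a := y - x) (by omega)
    have m2 := mod2 hn0 (a := x + (i - 1)) (by omega)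
    omega
  refine ⟨k, hk, ?_⟩
  unfold eD
  rw [bv_eq, hak, ← hy3]

/-! ### Which factor each edge belongs to -/

lemma eA_cases (c : Ctx n i) (hk : k < n) :
    eA n i k ∈ FF1 n i ∪ FF2 n i ∪ FF3 n i := by
  rcases Nat.mod_two_eq_zero_or_one k with hpar | hpar
  · rcases Nat.eq_zero_or_pos k with rfl | hk0
    · exact Or.inr (mem_FF3.mpr (Or.inl rfl))
    · exact Or.inl (Or.inr (mem_FF2.mpr (Or.inl ⟨k, ⟨hpar, by omega, hk⟩, rfl⟩)))
  · exact Or.inl (Or.inl (mem_FF1.mpr (Or.inl ⟨k, ⟨hpar, hk⟩, rfl⟩)))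

lemma eB_cases (c : Ctx n i) (hk : k < n) :
    eB n i k ∈ FF1 n i ∪ FF2 n i ∪ FF3 n i := by
  rcases Nat.mod_two_eq_zero_or_one k with hpar | hpar
  · rcases Nat.eq_zero_or_pos k with rfl | hk0
    · exact Or.inr (mem_FF3.mpr (Or.inr (Or.inl rfl)))
    · exact Or.inl (Or.inr (mem_FF2.mpr (Or.inr (Or.inl ⟨k, ⟨hpar, by omega, hk⟩, rfl⟩))))
  · exact Or.inl (Or.inl (mem_FF1.mpr (Or.inr (Or.inl ⟨k, ⟨hpar, hk⟩, rfl⟩))))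

lemma eD_cases (c : Ctx n i) (hk : k < n) :
    eD n i k ∈ FF1 n i ∪ FF2 n i ∪ FF3 n i := by
  match k with
  | 0 => exact Or.inl (Or.inl (mem_FF1.mpr (Or.inr (Or.inr rfl))))
  | 1 => exact Or.inl (Or.inr (mem_FF2.mpr (Or.inr (Or.inr rfl))))
  | (m + 2) => exact Or.inr (mem_FF3.mpr (Or.inr (Or.inr ⟨m + 2, ⟨by omega, hk⟩, rfl⟩)))

/-! ### The union -/

lemma union_eq (c : Ctx n i) :
    FF1 n i ∪ FF2 n i ∪ FF3 n i = AA n i ∪ BB n i ∪ DD n (i - 1) := by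
  ext p
  constructor
  · intro h
    have h2 : (∃ k, p = eA n i k) ∨ (∃ k, p = eB n i k) ∨ (∃ k, p = eD n i k) := by
      rcases h with h | h
      · rcases h with h | h
        · rcases mem_FF1.mp h with ⟨k, _, rfl⟩ | ⟨k, _, rfl⟩ | rfl
          · exact Or.inl ⟨k, rfl⟩
          · exact Or.inr (Or.inl ⟨k, rfl⟩)
          · exact Or.inr (Or.inr ⟨0, rfl⟩)
        · rcases mem_FF2.mp h with ⟨k, _, rfl⟩ | ⟨k, _, rfl⟩ | rfl
          · exact Or.inl ⟨k, rfl⟩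
          · exact Or.inr (Or.inl ⟨k, rfl⟩)
          · exact Or.inr (Or.inr ⟨1, rfl⟩)
      · rcases mem_FF3.mp h with rfl | rfl | ⟨k, _, rfl⟩
        · exact Or.inl ⟨0, rfl⟩
        · exact Or.inr (Or.inl ⟨0, rfl⟩)
        · exact Or.inr (Or.inr ⟨k, rfl⟩)
    rcases h2 with ⟨k, rfl⟩ | ⟨k, rfl⟩ | ⟨k, rfl⟩
    · exact Or.inl (Or.inl (eA_mem_AA c k))
    · exact Or.inl (Or.inr (eB_mem_BB c k))
    · exact Or.inr (eD_mem_DD c k)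
  · intro h
    rcases h with (h | h) | h
    · obtain ⟨x, y, hx, hy, hxy, hd, rfl⟩ := h
      rcases hd with hd | hd
      · obtain ⟨k, hk, he⟩ := AA_repr c hx hy hd
        rw [he]; exact eA_cases c hk
      · obtain ⟨k, hk, he⟩ := AA_repr c hy hx hd
        rw [Finset.pair_comm, he]; exact eA_cases c hk
    · obtain ⟨x, y, hx1, hx2, hy1, hy2, hxy, hd, rfl⟩ := h
      rcases hd with hd | hd
      · obtain ⟨k, hk, he⟩ := BB_repr c hx1 hx2 hy1 hy2 hd
        rw [he]; exact eB_cases c hk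
      · obtain ⟨k, hk, he⟩ := BB_repr c hy1 hy2 hx1 hx2 hd
        rw [Finset.pair_comm, he]; exact eB_cases c hk
    · obtain ⟨x, y, hx, hy1, hy2, hd, rfl⟩ := h
      obtain ⟨k, hk, he⟩ := DD_repr c hx hy1 hy2 hd
      rw [he]; exact eD_cases c hk
/-! ### Disjointness of the three factors -/

lemma FF1_disj_FF2 (c : Ctx n i) : Disjoint (FF1 n i) (FF2 n i) := by
  have h7 := c.h7
  rw [Set.disjoint_left]
  intro p h1 h2
  rcases mem_FF1.mp h1 with ⟨k, ⟨hk1, hk2⟩, rfl⟩ | ⟨k, ⟨hk1, hk2⟩, rfl⟩ | rfl <;>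
    rcases mem_FF2.mp h2 with ⟨m, ⟨hm1, hm2, hm3⟩, he⟩ | ⟨m, ⟨hm1, hm2, hm3⟩, he⟩ | he
  · have := eA_idx c he.symm
    rw [Nat.mod_eq_of_lt hk2, Nat.mod_eq_of_lt hm3] at this
    omega
  · exact eA_ne_eB c.hn0 he.symm
  · exact eA_ne_eD c.hn0 he
  · exact eA_ne_eB c.hn0 he
  · have := eB_idx c he.symm
    rw [Nat.mod_eq_of_lt hk2, Nat.mod_eq_of_lt hm3] at this
    omega
  · exact eB_ne_eD c.hn0 he
  · exact eA_ne_eD c.hn0 he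
  · exact eB_ne_eD c.hn0 he
  · have := eD_idx c he
    rw [Nat.zero_mod, Nat.mod_eq_of_lt (show 1 < n by omega)] at this
    omega

lemma FF1_disj_FF3 (c : Ctx n i) : Disjoint (FF1 n i) (FF3 n i) := by
  have h7 := c.h7
  rw [Set.disjoint_left]
  intro p h1 h2
  rcases mem_FF1.mp h1 with ⟨k, ⟨hk1, hk2⟩, rfl⟩ | ⟨k, ⟨hk1, hk2⟩, rfl⟩ | rfl <;>
    rcases mem_FF3.mp h2 with he | he | ⟨m, ⟨hm1, hm2⟩, he⟩
  · have := eA_idx c he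
    rw [Nat.mod_eq_of_lt hk2, Nat.zero_mod] at this
    omega
  · exact eA_ne_eB c.hn0 he
  · exact eA_ne_eD c.hn0 he.symm
  · exact eA_ne_eB c.hn0 he.symm
  · have := eB_idx c he
    rw [Nat.mod_eq_of_lt hk2, Nat.zero_mod] at this
    omega
  · exact eB_ne_eD c.hn0 he.symm
  · exact eA_ne_eD c.hn0 he.symm
  · exact eB_ne_eD c.hn0 he.symm
  · have := eD_idx c he.symm
    rw [Nat.zero_mod, Nat.mod_eq_of_lt hm2] at this
    omega

lemma FF2_disj_FF3 (c : Ctx n i) : Disjoint (FF2 n i) (FF3 n i) := by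
  have h7 := c.h7
  rw [Set.disjoint_left]
  intro p h1 h2
  rcases mem_FF2.mp h1 with ⟨k, ⟨hk1, hk2, hk3⟩, rfl⟩ | ⟨k, ⟨hk1, hk2, hk3⟩, rfl⟩ | rfl <;>
    rcases mem_FF3.mp h2 with he | he | ⟨m, ⟨hm1, hm2⟩, he⟩
  · have := eA_idx c he
    rw [Nat.mod_eq_of_lt hk3, Nat.zero_mod] at this
    omega
  · exact eA_ne_eB c.hn0 he
  · exact eA_ne_eD c.hn0 he.symm
  · exact eA_ne_eB c.hn0 he.symm
  · have := eB_idx c he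
    rw [Nat.mod_eq_of_lt hk3, Nat.zero_mod] at this
    omega
  · exact eB_ne_eD c.hn0 he.symm
  · exact eA_ne_eD c.hn0 he.symm
  · exact eB_ne_eD c.hn0 he.symm
  · have := eD_idx c he.symm
    rw [Nat.mod_eq_of_lt hm2, Nat.mod_eq_of_lt (show 1 < n by omega)] at this
    omega

end ABD

/-- For prime `n ≥ 7` with `n ≡ 1, 5 (mod 6)` and `1 ≤ i ≤ (n-1)/2`, the edge set
`A_i ∪ B_i ∪ D_{i-1}` can be partitioned into three perfect matchings of `K_{2n}`. -/

theorem ABD_three_factors (n i : ℕ) (hp : n.Prime) (h7 : 7 ≤ n)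
    (hmod : n % 6 = 1 ∨ n % 6 = 5) (hi1 : 1 ≤ i) (hi2 : i ≤ (n - 1) / 2) :
    ∃ F1 F2 F3 : Set (Finset ℕ),
      IsOneFactor n F1 ∧ IsOneFactor n F2 ∧ IsOneFactor n F3 ∧
      Disjoint F1 F2 ∧ Disjoint F1 F3 ∧ Disjoint F2 F3 ∧
      F1 ∪ F2 ∪ F3 = AA n i ∪ BB n i ∪ DD n (i - 1) := by
  have c : ABD.Ctx n i := ⟨hp, h7, by omega, hi1, by omega⟩
  exact ⟨ABD.FF1 n i, ABD.FF2 n i, ABD.FF3 n i, ABD.FF1_isOF c, ABD.FF2_isOF c,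
    ABD.FF3_isOF c, ABD.FF1_disj_FF2 c, ABD.FF1_disj_FF3 c, ABD.FF2_disj_FF3 c,
    ABD.union_eq c⟩
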